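/- Suppose v_n ∈ Z_4^n consists of p ones followed by q twos (p + q = n), and D_n is the 2^{2n} × (2n+2) Gray-map image of the code generated by (v_n, I_n). Then the aliasing index of the column set s_0 = {1, 2, ..., 2p+2} equals 1, i.e., s_0 is a complete word of length 2p+2. -/

import Mathlib

open Finset

/-- The Gray map `φ : Z₄ → {−1,1}²`: φ(0)=(1,1), φ(1)=(1,−1), φ(2)=(−1,−1), φ(3)=(−1,1). -/
def gray (x : ZMod 4) : Fin 2 → ℤ := fun c =>
  if c = 0 then (if x = 0 ∨ x = 1 then 1 else -1)
  else (if x = 0 ∨ x = 3 then 1 else -1)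

/-- The `2^{2n} × (2n+2)` two-level design which is the Gray-map image of the quaternary
code generated by `G = (v, Iₙ)`.  Rows are indexed by `u : Fin n → ZMod 4`; the codeword is
`(∑ uᵢvᵢ, u₁, …, uₙ)` and each `Z₄`-coordinate gives two ±1 columns via the Gray map. -/
def Dv {n : ℕ} (v : Fin n → ZMod 4) :
    (Fin n → ZMod 4) → (Fin (n + 1) × Fin 2) → ℤ :=
  fun u p => gray ((Fin.cons (∑ i, u i * v i) u : Fin (n + 1) → ZMod 4) p.1) p.2

/-- The J-characteristic `j(s; D) = ∑ᵢ ∏_{c ∈ s} D i c`. -/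
def Jchar {I J : Type*} [Fintype I] (D : I → J → ℤ) (s : Finset J) : ℤ :=
  ∑ i, ∏ c ∈ s, D i c

/-- The aliasing index `ρ(s; D) = |j(s; D)| / N`. -/
def rho {I J : Type*} [Fintype I] (D : I → J → ℤ) (s : Finset J) : ℚ :=
  |(Jchar D s : ℚ)| / (Fintype.card I : ℚ)

/-- `freq v z` = number of occurrences of `z ∈ Z₄` in the vector `v`. -/
def freq {n : ℕ} (v : Fin n → ZMod 4) (z : ZMod 4) : ℕ :=
  (Finset.univ.filter fun i => v i = z).card

/-- A design has projectivity (at least) `p` if every projection onto `p` columns contains a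
complete `2^p` factorial. -/
def hasProjectivity {I J : Type*} (D : I → J → ℤ) (p : ℕ) : Prop :=
  ∀ s : Finset J, s.card = p → ∀ ε : J → ℤ, (∀ c, ε c = 1 ∨ ε c = -1) →
    ∃ i, ∀ c ∈ s, D i c = ε c

/-- `hasResolution D R` : the generalized resolution of `D` equals `R`, i.e.
`R = r + 1 − max_{|s| = r} ρ(s; D)` where `r` is the smallest size of a (nonempty) column
subset with positive aliasing index. -/
def hasResolution {I J : Type*} [Fintype I] (D : I → J → ℤ) (R : ℚ) : Prop :=
  ∃ (r : ℕ) (m : ℚ),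
    (∃ s : Finset J, s.card = r ∧ 0 < rho D s) ∧
    (∀ s : Finset J, s.Nonempty → s.card < r → rho D s = 0) ∧
    (∃ s : Finset J, s.card = r ∧ rho D s = m) ∧
    (∀ s : Finset J, s.card = r → rho D s ≤ m) ∧
    R = (r : ℚ) + 1 - m

/-- The generalized wordlength pattern `A_k(D) = ∑_{|s| = k} ρ(s; D)²`. -/
def Apattern {I J : Type*} [Fintype I] [Fintype J] (D : I → J → ℤ) (k : ℕ) : ℚ :=
  ∑ s ∈ Finset.powersetCard k Finset.univ, (rho D s) ^ 2

/-- The half-fraction of `D` obtained by keeping the rows where the branching column `b`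
equals `+1` and deleting column `b`. -/
def halfFraction {I J : Type*} (D : I → J → ℤ) (b : J) :
    {i : I // D i b = 1} → {c : J // c ≠ b} → ℤ :=
  fun i c => D i.1 c.1

/-- Sequential (lexicographic) comparison of generalized wordlength patterns:
`D` has no more aberration than `D'`. -/
def wlpLe {I I' J : Type*} [Fintype I] [Fintype I'] [Fintype J]
    (D : I → J → ℤ) (D' : I' → J → ℤ) : Prop :=
  ∀ k : ℕ, (∀ j < k, Apattern D j = Apattern D' j) → Apattern D k ≤ Apattern D' k



def chi (x : ZMod 4) : ℤ := if x = 0 ∨ x = 2 then 1 else -1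

lemma chi_add (a b : ZMod 4) : chi (a + b) = chi a * chi b := by revert a b; decide

lemma gray_mul (x : ZMod 4) : gray x 0 * gray x 1 = chi x := by revert x; decide

lemma chi_sq (x : ZMod 4) : chi x * chi x = 1 := by revert x; decide

lemma chi_two (x : ZMod 4) : chi (x * 2) = 1 := by revert x; decide

lemma chi_sum {α : Type*} (s : Finset α) (f : α → ZMod 4) :
    chi (∑ i ∈ s, f i) = ∏ i ∈ s, chi (f i) := by
  classical
  induction s using Finset.induction with
  | empty => simp [chi]
  | insert _ _ h ih => rw [Finset.sum_insert h, Finset.prod_insert h, chi_add, ih]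

/-- part of Lemma 4: if `v` consists of `p` ones followed by `q` twos
(`p + q = n`), the column set `s₀ = {1, 2, …, 2p+2}` is a complete word of length `2p+2`,
i.e. it has `2p+2` columns and aliasing index 1. -/
theorem statement16 (n p q : ℕ) (hpq : p + q = n) (v : Fin n → ZMod 4)
    (hv1 : ∀ i : Fin n, (i : ℕ) < p → v i = 1)
    (hv2 : ∀ i : Fin n, p ≤ (i : ℕ) → v i = 2)
    (s0 : Finset (Fin (n + 1) × Fin 2))
    (hs0 : s0 = Finset.univ.filter fun pc : Fin (n + 1) × Fin 2 => (pc.1 : ℕ) ≤ p) :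
    s0.card = 2 * p + 2 ∧ rho (Dv v) s0 = 1 := by
  have hpn : p ≤ n := by omega
  subst hs0
  have hprodset : (Finset.univ.filter fun pc : Fin (n + 1) × Fin 2 => (pc.1 : ℕ) ≤ p)
      = (Finset.univ.filter fun j : Fin (n + 1) => (j : ℕ) ≤ p) ×ˢ Finset.univ := by
    ext pc
    simp [Finset.mem_product]
  have hA : (Finset.univ.filter fun j : Fin (n + 1) => (j : ℕ) ≤ p)
      = Finset.image (Fin.castLE (by omega : p + 1 ≤ n + 1)) Finset.univ := by
    ext j
    simp only [Finset.mem_filter, Finset.mem_univ, true_and, Finset.mem_image]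
    constructor
    · intro hj
      exact ⟨⟨(j : ℕ), by omega⟩, rfl⟩
    · rintro ⟨k, rfl⟩
      simpa using Nat.lt_succ_iff.mp k.isLt
  have hcardA : (Finset.univ.filter fun j : Fin (n + 1) => (j : ℕ) ≤ p).card = p + 1 := by
    rw [hA, Finset.card_image_of_injective _ (Fin.castLE_injective _)]
    simp
  constructor
  · rw [hprodset, Finset.card_product, hcardA]
    simp [Fintype.card_fin]
    ring
  · -- the row product is 1 for every row
    have key : ∀ u : Fin n → ZMod 4,
        (∏ pc ∈ (Finset.univ.filter fun pc : Fin (n + 1) × Fin 2 => (pc.1 : ℕ) ≤ p),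
          Dv v u pc) = 1 := by
      intro u
      rw [hprodset]
      set w : Fin (n + 1) → ZMod 4 := Fin.cons (∑ i, u i * v i) u with hw
      have h1 : (∏ pc ∈ (Finset.univ.filter fun j : Fin (n + 1) => (j : ℕ) ≤ p) ×ˢ
            (Finset.univ : Finset (Fin 2)), Dv v u pc)
          = ∏ j ∈ Finset.univ.filter (fun j : Fin (n + 1) => (j : ℕ) ≤ p), chi (w j) := by
        rw [Finset.prod_product]
        refine Finset.prod_congr rfl fun j _ => ?_
        rw [Fin.prod_univ_two]
        exact gray_mul (w j)
      rw [h1, Finset.prod_filter, Fin.prod_univ_succ]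
      have hw0 : w 0 = ∑ i, u i * v i := Fin.cons_zero _ _
      have hQ0 : (if ((0 : Fin (n + 1)) : ℕ) ≤ p then chi (w 0) else 1)
          = ∏ i : Fin n, (if (i : ℕ) < p then chi (u i) else 1) := by
        simp only [Fin.val_zero, Nat.zero_le, if_true, hw0, chi_sum]
        refine Finset.prod_congr rfl fun i _ => ?_
        by_cases hi : (i : ℕ) < p
        · rw [if_pos hi, hv1 i hi, mul_one]
        · rw [if_neg hi, hv2 i (by omega), chi_two]
      have hQs : (∏ i : Fin n, (if ((i.succ : Fin (n + 1)) : ℕ) ≤ p then chi (w i.succ) else 1))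
          = ∏ i : Fin n, (if (i : ℕ) < p then chi (u i) else 1) := by
        refine Finset.prod_congr rfl fun i _ => ?_
        have : w i.succ = u i := Fin.cons_succ _ _ _
        rw [this]
        by_cases hi : (i : ℕ) < p
        · rw [if_pos (by simp [Fin.val_succ, Nat.succ_le_iff, hi]), if_pos hi]
        · rw [if_neg (by simp [Fin.val_succ, Nat.succ_le_iff, hi]), if_neg hi]
      rw [hQ0, hQs, ← Finset.prod_mul_distrib]
      refine Finset.prod_eq_one fun i _ => ?_
      by_cases hi : (i : ℕ) < p
      · rw [if_pos hi, chi_sq]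
      · rw [if_neg hi, mul_one]
    have hJ : Jchar (Dv v) (Finset.univ.filter fun pc : Fin (n + 1) × Fin 2 => (pc.1 : ℕ) ≤ p)
        = (Fintype.card (Fin n → ZMod 4) : ℤ) := by
      unfold Jchar
      rw [Finset.sum_congr rfl fun u _ => key u]
      simp
    unfold rho
    rw [hJ]
    have hpos : (0 : ℚ) < (Fintype.card (Fin n → ZMod 4) : ℚ) := by
      exact_mod_cast Fintype.card_pos
    rw [Int.cast_natCast, abs_of_pos hpos, div_self (ne_of_gt hpos)]
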